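/- Assume Q(s,u) ≠ ∅ for every u ∈ M and every s ∈ ℝ, and let α ∈ (0,1). Define the extended-real-valued upper fiducial confidence bound C⁺_α(s) := sup{c ∈ ℝ : P(Q⁺_s(U*) < c) ≤ 1−α}. Then s ↦ C⁺_α(s) is nondecreasing (hence measurable), and for every θ ∈ ℝ the coverage of the one-sided upper confidence bound is at least the nominal level: P( θ ≤ C⁺_α(G_S(U,θ)) ) ≥ 1 − α. -/

import Mathlib

open MeasureTheory Filter Set Topology

/-- Auxiliary: `Q⁺_s(u)` is nondecreasing in `s`. -/
lemma aux_qsup_mono {M : Type*} (GS : M → ℝ → ℝ) (hmono : ∀ u : M, Monotone (GS u))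
    (hne : ∀ (u : M) (s : ℝ), {θ : ℝ | GS u θ = s}.Nonempty) (u : M) {s s' : ℝ} (h : s ≤ s') :
    sSup (Real.toEReal '' {θ : ℝ | GS u θ = s}) ≤
      sSup (Real.toEReal '' {θ : ℝ | GS u θ = s'}) := by
  apply sSup_le
  rintro x ⟨θ, hθ, rfl⟩
  simp only [mem_setOf_eq] at hθ
  obtain ⟨θ', hθ'⟩ := hne u s'
  simp only [mem_setOf_eq] at hθ'
  by_cases h' : GS u θ = s'
  · exact le_sSup ⟨θ, h', rfl⟩
  · have hle : θ ≤ θ' := by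
      by_contra hlt
      push_neg at hlt
      have h1 : s' ≤ s := by
        have := hmono u hlt.le
        rw [hθ, hθ'] at this
        exact this
      exact h' (by rw [hθ]; exact le_antisymm h h1)
    exact le_trans (by exact_mod_cast hle) (le_sSup ⟨θ', hθ', rfl⟩)

/-- Auxiliary: if `Q⁺_s(u) < θ` then `s < GS u θ`. -/
lemma aux_qsup_lt {M : Type*} (GS : M → ℝ → ℝ) (hmono : ∀ u : M, Monotone (GS u))
    (hne : ∀ (u : M) (s : ℝ), {θ : ℝ | GS u θ = s}.Nonempty) (u : M) {s θ : ℝ}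
    (h : sSup (Real.toEReal '' {θ : ℝ | GS u θ = s}) < (θ : EReal)) : s < GS u θ := by
  obtain ⟨θ'', h''⟩ := hne u s
  simp only [mem_setOf_eq] at h''
  have h1 : (θ'' : EReal) ≤ sSup (Real.toEReal '' {θ : ℝ | GS u θ = s}) :=
    le_sSup ⟨θ'', h'', rfl⟩
  have h2 : θ'' < θ := by exact_mod_cast h1.trans_lt h
  have h3 : s ≤ GS u θ := h'' ▸ hmono u h2.le
  rcases h3.lt_or_eq with h4 | h4
  · exact h4
  · have hθmem : θ ∈ {θ : ℝ | GS u θ = s} := h4.symm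
    exact absurd (le_sSup (mem_image_of_mem Real.toEReal hθmem)) (not_le.mpr h)

/-- the upper fiducial confidence bound
`C⁺_α(s) = sup{c : P(Q⁺_s(U*) < c) ≤ 1−α}` is nondecreasing in `s` and has one-sided
frequentist coverage at least `1 − α`. -/
theorem fiducial_upper_confidence_bound
    {M Ω : Type*} [MeasurableSpace M] [MeasurableSpace Ω]
    (P : Measure Ω) [IsProbabilityMeasure P]
    (U Ustar : Ω → M) (hU : Measurable U) (hUstar : Measurable Ustar)
    (hdist : Measure.map Ustar P = Measure.map U P)
    (GS : M → ℝ → ℝ) (hGS : Measurable (Function.uncurry GS))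
    (hmono : ∀ u : M, Monotone (GS u))
    (hne : ∀ (u : M) (s : ℝ), {θ : ℝ | GS u θ = s}.Nonempty)
    (α : ℝ) (hα : α ∈ Set.Ioo (0 : ℝ) 1)
    (Cplus : ℝ → EReal)
    (hC : ∀ s : ℝ, Cplus s = sSup (Real.toEReal ''
      {c : ℝ | (P {ω : Ω | sSup (Real.toEReal '' {θ : ℝ | GS (Ustar ω) θ = s})
        < (c : EReal)}).toReal ≤ 1 - α})) :
    Monotone Cplus ∧
    ∀ θ : ℝ, 1 - α ≤ (P {ω : Ω | (θ : EReal) ≤ Cplus (GS (U ω) θ)}).toReal := by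
  constructor
  · intro s s' hss'
    rw [hC s, hC s']
    apply sSup_le_sSup
    apply image_mono
    intro c hc
    simp only [mem_setOf_eq] at hc ⊢
    refine le_trans (ENNReal.toReal_mono (measure_ne_top P _) (measure_mono ?_)) hc
    intro ω hω
    exact lt_of_le_of_lt (aux_qsup_mono GS hmono hne (Ustar ω) hss') hω
  · intro θ
    set g : M → ℝ := fun u => GS u θ with hg
    have hgm : Measurable g := hGS.comp (measurable_id.prodMk measurable_const)
    haveI : IsProbabilityMeasure (P.map U) := Measure.isProbabilityMeasure_map hU.aemeasurable
    set ν := P.map U with hν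
    set F : ℝ → ℝ := fun s => (ν {u | g u ≤ s}).toReal with hF
    set A : Set ℝ := {s | F s < α} with hA
    have hFm : Monotone F := fun a b hab =>
      ENNReal.toReal_mono (measure_ne_top ν _) (measure_mono fun u hu => le_trans hu hab)
    have hAlow : IsLowerSet A := fun a b hba ha => lt_of_le_of_lt (hFm hba) ha
    have hAmeas : MeasurableSet A := hFm.measurable measurableSet_Iio
    -- bad-event inclusion
    have hbad : {ω : Ω | Cplus (GS (U ω) θ) < (θ : EReal)} ⊆ U ⁻¹' (g ⁻¹' A) := by
      intro ω hω
      simp only [mem_setOf_eq] at hω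
      set s := GS (U ω) θ with hs
      have h1 : ¬ (P {ω' : Ω | sSup (Real.toEReal '' {θ : ℝ | GS (Ustar ω') θ = s})
          < (θ : EReal)}).toReal ≤ 1 - α := by
        intro hle
        have hmem : (θ : EReal) ≤ Cplus s := by
          rw [hC s]; exact le_sSup ⟨θ, hle, rfl⟩
        exact absurd hmem (not_le.mpr hω)
      push_neg at h1
      have h2 : {ω' : Ω | sSup (Real.toEReal '' {θ : ℝ | GS (Ustar ω') θ = s})
          < (θ : EReal)} ⊆ Ustar ⁻¹' {u | s < g u} := by
        intro ω' hω'
        exact aux_qsup_lt GS hmono hne (Ustar ω') hω'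
      have hmeasgt : MeasurableSet {u : M | s < g u} := measurableSet_lt measurable_const hgm
      have h3 : (P {ω' : Ω | sSup (Real.toEReal '' {θ : ℝ | GS (Ustar ω') θ = s})
          < (θ : EReal)}).toReal ≤ (ν {u | s < g u}).toReal := by
        apply ENNReal.toReal_mono (measure_ne_top ν _)
        calc P _ ≤ P (Ustar ⁻¹' {u | s < g u}) := measure_mono h2
          _ = (P.map Ustar) {u | s < g u} := (Measure.map_apply hUstar hmeasgt).symm
          _ = ν {u | s < g u} := by rw [hdist]
      have h4 : 1 - α < (ν {u | s < g u}).toReal := lt_of_lt_of_le h1 h3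
      have h5 : ν {u | s < g u} = 1 - ν {u | g u ≤ s} := by
        have hc := measure_compl (μ := ν) (s := {u : M | g u ≤ s})
          (measurableSet_le hgm measurable_const) (measure_ne_top ν _)
        have : {u : M | g u ≤ s}ᶜ = {u | s < g u} := by
          ext u; simp [not_le]
        rw [this] at hc
        simpa using hc
      have h6 : (ν {u | s < g u}).toReal = 1 - F s := by
        rw [h5, ENNReal.toReal_sub_of_le prob_le_one (by simp)]
        simp [hF]
      rw [h6] at h4
      simp only [mem_preimage, mem_setOf_eq, hA]
      linarith
    -- each point of A gives small measure
    have hin : ∀ t ∈ A, ν {u | g u ≤ t} < ENNReal.ofReal α := by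
      intro t ht
      exact (ENNReal.lt_ofReal_iff_toReal_lt (measure_ne_top ν _)).mpr ht
    -- measure of g ⁻¹' A ≤ α
    have hPA : ν (g ⁻¹' A) ≤ ENNReal.ofReal α := by
      rcases A.eq_empty_or_nonempty with hAe | hAne
      · simp [hAe]
      have hbdd : BddAbove A := by
        by_contra hnb
        have hAuniv : ∀ s : ℝ, s ∈ A := by
          intro s
          obtain ⟨a, ha, hsa⟩ := not_bddAbove_iff.mp hnb s
          exact hAlow hsa.le ha
        have hmono1 : Monotone fun n : ℕ => {u | g u ≤ (n : ℝ)} := by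
          intro m n hmn u hu
          simp only [mem_setOf_eq] at hu ⊢
          exact hu.trans (by exact_mod_cast hmn)
        have h1 : (⋃ n : ℕ, {u | g u ≤ (n : ℝ)}) = univ := by
          ext u; simp only [mem_iUnion, mem_univ, iff_true, mem_setOf_eq]
          exact exists_nat_ge (g u)
        have h2 : ν (univ : Set M) ≤ ENNReal.ofReal α := by
          rw [← h1, hmono1.directed_le.measure_iUnion]
          exact iSup_le fun n => (hin _ (hAuniv n)).le
        rw [measure_univ] at h2
        exact absurd (ENNReal.ofReal_lt_one.mpr hα.2) (not_lt.mpr h2)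
      set t₀ := sSup A with ht₀
      by_cases hmem : t₀ ∈ A
      · calc ν (g ⁻¹' A) ≤ ν {u | g u ≤ t₀} := measure_mono fun u hu => le_csSup hbdd hu
          _ ≤ ENNReal.ofReal α := (hin _ hmem).le
      · have hsub : g ⁻¹' A ⊆ {u | g u < t₀} := by
          intro u hu
          exact lt_of_le_of_ne (le_csSup hbdd hu) (fun h => hmem (by rw [ht₀, ← h]; exact hu))
        have h1 : {u | g u < t₀} = ⋃ n : ℕ, {u | g u ≤ t₀ - 1 / (n + 1)} := by
          ext u; simp only [mem_setOf_eq, mem_iUnion]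
          constructor
          · intro h
            obtain ⟨n, hn⟩ := exists_nat_one_div_lt (sub_pos.mpr h)
            exact ⟨n, by push_cast at hn ⊢; linarith⟩
          · rintro ⟨n, hn⟩
            have hpos : (0 : ℝ) < 1 / ((n : ℝ) + 1) := by positivity
            push_cast at hn
            linarith
        have hmono2 : Monotone fun n : ℕ => {u | g u ≤ t₀ - 1 / ((n : ℝ) + 1)} := by
          intro m n hmn u hu
          simp only [mem_setOf_eq] at hu ⊢
          have h1d : 1 / ((n : ℝ) + 1) ≤ 1 / ((m : ℝ) + 1) :=
            one_div_le_one_div_of_le (by positivity)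
              (by exact_mod_cast Nat.add_le_add_right hmn 1)
          linarith
        have h2 : ∀ n : ℕ, t₀ - 1 / ((n : ℝ) + 1) ∈ A := by
          intro n
          have hpos : (0 : ℝ) < 1 / ((n : ℝ) + 1) := by positivity
          obtain ⟨a, ha, hlt⟩ := exists_lt_of_lt_csSup hAne (show t₀ - 1 / ((n : ℝ) + 1) < t₀ by linarith)
          exact hAlow hlt.le ha
        calc ν (g ⁻¹' A) ≤ ν {u | g u < t₀} := measure_mono hsub
          _ = ⨆ n : ℕ, ν {u | g u ≤ t₀ - 1 / ((n : ℝ) + 1)} := by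
              rw [h1, hmono2.directed_le.measure_iUnion]
          _ ≤ ENNReal.ofReal α := iSup_le fun n => (hin _ (h2 n)).le
    have hPbad : P {ω : Ω | Cplus (GS (U ω) θ) < (θ : EReal)} ≤ ENNReal.ofReal α := by
      calc P _ ≤ P (U ⁻¹' (g ⁻¹' A)) := measure_mono hbad
        _ = ν (g ⁻¹' A) := (Measure.map_apply hU (hgm hAmeas)).symm
        _ ≤ ENNReal.ofReal α := hPA
    have hsplit : (1 : ENNReal) ≤ P {ω | (θ : EReal) ≤ Cplus (GS (U ω) θ)}
        + P {ω | Cplus (GS (U ω) θ) < (θ : EReal)} := by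
      have hcover : (univ : Set Ω) ⊆ {ω | (θ : EReal) ≤ Cplus (GS (U ω) θ)}
          ∪ {ω | Cplus (GS (U ω) θ) < (θ : EReal)} := by
        intro ω _
        rcases le_or_gt (θ : EReal) (Cplus (GS (U ω) θ)) with h | h
        · exact Or.inl h
        · exact Or.inr h
      calc (1 : ENNReal) = P univ := measure_univ.symm
        _ ≤ P ({ω | (θ : EReal) ≤ Cplus (GS (U ω) θ)}
            ∪ {ω | Cplus (GS (U ω) θ) < (θ : EReal)}) := measure_mono hcover
        _ ≤ _ := measure_union_le _ _
    have h7 : 1 - ENNReal.ofReal α ≤ P {ω | (θ : EReal) ≤ Cplus (GS (U ω) θ)} := by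
      rw [tsub_le_iff_right]
      exact hsplit.trans (add_le_add_right hPbad _)
    calc 1 - α = (1 - ENNReal.ofReal α).toReal := by
          rw [ENNReal.toReal_sub_of_le (ENNReal.ofReal_le_one.mpr hα.2.le) (by simp)]
          simp [ENNReal.toReal_ofReal hα.1.le]
      _ ≤ _ := ENNReal.toReal_mono (measure_ne_top P _) h7
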